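/- Let A be a topological abelian group in the class ℰ. Then for every positive integer n, the natural map A → A_∧ := lim_{m≥1} A/mA restricts to an isomorphism from the n-torsion subgroup _n A onto the n-torsion subgroup _n(A_∧). (Claim used in the proof of Theorem 'refin1' b): since H^1_c(U,𝒞) is in the class ℰ, the ℓ^m-torsion of H^1_c(U,𝒞) and of H^1_c(U,𝒞)_∧ coincide.) -/

import Mathlib

/-- The subgroup `nA = {n·a : a ∈ A}` of an abelian group `A`. -/
def nSub (A : Type*) [AddCommGroup A] (n : ℕ) : AddSubgroup A where
  carrier := Set.range fun a : A => n • a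
  zero_mem' := ⟨0, smul_zero n⟩
  add_mem' := by rintro x y ⟨a, rfl⟩ ⟨b, rfl⟩; exact ⟨a + b, smul_add n a b⟩
  neg_mem' := by rintro x ⟨a, rfl⟩; exact ⟨-a, smul_neg n a⟩

theorem nSub_le {A : Type*} [AddCommGroup A] {n m : ℕ} (h : n ∣ m) :
    nSub A m ≤ nSub A n := by
  rintro x ⟨a, rfl⟩
  obtain ⟨c, rfl⟩ := h
  exact ⟨c • a, (mul_smul n c a).symm⟩

/-- The natural projection `A/mA → A/nA` when `n ∣ m`. -/
def projMap {A : Type*} [AddCommGroup A] {n m : ℕ} (h : n ∣ m) :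
    A ⧸ nSub A m →+ A ⧸ nSub A n :=
  QuotientAddGroup.map _ _ (AddMonoidHom.id A) fun _x hx => nSub_le h hx

/-- The completion `A_∧ = lim_{n ≥ 1} A/nA`, the inverse limit over positive integers
ordered by divisibility, as the subgroup of compatible families. -/
def ComplNA (A : Type*) [AddCommGroup A] :
    AddSubgroup (∀ n : ℕ+, A ⧸ nSub A (n : ℕ)) where
  carrier := {f | ∀ (n m : ℕ+) (h : (n : ℕ) ∣ (m : ℕ)), projMap h (f m) = f n}
  zero_mem' := fun _n _m _h => map_zero _
  add_mem' := by
    intro f g hf hg n m h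
    simp only [Pi.add_apply, map_add, hf n m h, hg n m h]
  neg_mem' := by
    intro f hf n m h
    simp only [Pi.neg_apply, map_neg, hf n m h]

/-- The natural map `A → A_∧` sending `a` to its family of residues. -/
def toCompl (A : Type*) [AddCommGroup A] : A →+ ↥(ComplNA A) where
  toFun a := ⟨fun _n => QuotientAddGroup.mk a, fun _n _m _h => rfl⟩
  map_zero' := rfl
  map_add' _a _b := rfl

/-- A topological abelian group `A` belongs to the class ℰ if it admits a closed
subgroup `P` which is profinite (compact, Hausdorff and totally disconnected) such
that the quotient `A ⧸ P`, with the quotient topology, is discrete and finitely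
generated. -/
def IsClassE (A : Type*) [AddCommGroup A] [TopologicalSpace A] : Prop :=
  ∃ P : AddSubgroup A, IsClosed (P : Set A) ∧ CompactSpace P ∧ T2Space P ∧
    TotallyDisconnectedSpace P ∧ DiscreteTopology (A ⧸ P) ∧ AddGroup.FG (A ⧸ P)

/-! ### Auxiliary algebraic lemmas -/

/-- The torsion subgroup, as a `ℤ`-submodule. -/
private def torSubmodule (G : Type*) [AddCommGroup G] : Submodule ℤ G where
  carrier := {g : G | ∃ k : ℕ, 0 < k ∧ k • g = 0}
  zero_mem' := ⟨1, one_pos, smul_zero 1⟩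
  add_mem' := by
    rintro a b ⟨k, hk, hka⟩ ⟨l, hl, hlb⟩
    refine ⟨k * l, Nat.mul_pos hk hl, ?_⟩
    have h1 : (k * l) • a = 0 := by rw [mul_comm, mul_smul, hka, smul_zero]
    have h2 : (k * l) • b = 0 := by rw [mul_smul, hlb, smul_zero]
    rw [smul_add, h1, h2, add_zero]
  smul_mem' := by
    rintro z a ⟨k, hk, hka⟩
    refine ⟨k, hk, ?_⟩
    rw [smul_comm, hka, smul_zero]

private lemma torSubmodule_finite {G : Type*} [AddCommGroup G] (hfg : AddGroup.FG G) :
    Finite (torSubmodule G) := by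
  have h1 : Module.Finite ℤ G := Module.Finite.iff_addGroup_fg.mpr hfg
  have h2 : IsNoetherian ℤ G := isNoetherian_of_isNoetherianRing_of_finite ℤ G
  have h3 : Module.Finite ℤ (torSubmodule G) :=
    Module.Finite.iff_fg.mpr (IsNoetherian.noetherian _)
  have h4 : AddGroup.FG (torSubmodule G) := Module.Finite.iff_addGroup_fg.mp h3
  refine AddCommGroup.finite_of_fg_torsion _ (fun x => ?_)
  obtain ⟨k, hk, hka⟩ := x.2
  exact isOfFinAddOrder_iff_nsmul_eq_zero.mpr ⟨k, hk, Subtype.ext (by simpa using hka)⟩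

private lemma torsionSet_finite {G : Type*} [AddCommGroup G] (hfg : AddGroup.FG G) :
    {g : G | ∃ k : ℕ, 0 < k ∧ k • g = 0}.Finite := by
  have := torSubmodule_finite hfg
  exact Set.finite_coe_iff.mp this

private lemma exists_killer {G : Type*} [AddCommGroup G] (hfg : AddGroup.FG G) :
    ∃ e : ℕ, 0 < e ∧ ∀ g : G, (∃ k : ℕ, 0 < k ∧ k • g = 0) → e • g = 0 := by
  haveI := torSubmodule_finite hfg
  refine ⟨Nat.card (torSubmodule G), Nat.card_pos, fun g hg => ?_⟩
  have hx : Nat.card (torSubmodule G) • (⟨g, hg⟩ : torSubmodule G) = 0 := card_nsmul_eq_zero'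
  have h3 := congrArg ((torSubmodule G).subtype) hx
  rw [map_nsmul, map_zero] at h3
  exact h3

/-! ### Auxiliary topological lemmas -/

section Topo

variable {A : Type*} [AddCommGroup A] [TopologicalSpace A] [IsTopologicalAddGroup A]
  (P : AddSubgroup A)

private lemma P_isOpen [DiscreteTopology (A ⧸ P)] : IsOpen (P : Set A) := by
  have h : (P : Set A) = QuotientAddGroup.mk ⁻¹' ({0} : Set (A ⧸ P)) := by
    ext x
    simp [QuotientAddGroup.eq_zero_iff]
  rw [h]
  exact (isOpen_discrete _).preimage QuotientAddGroup.continuous_mk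

private lemma zero_isClosed (hPc : IsClosed (P : Set A)) [T2Space P] :
    IsClosed ({0} : Set A) := by
  have h1 : IsClosed ({(⟨0, P.zero_mem⟩ : P)} : Set P) := isClosed_singleton
  have h2 := hPc.isClosedEmbedding_subtypeVal.isClosedMap _ h1
  have h3 : ({0} : Set A) = Subtype.val '' ({(⟨0, P.zero_mem⟩ : P)} : Set P) := by
    simp
  rw [h3]; exact h2

private lemma nSub_isClosed (hPc : IsClosed (P : Set A)) [CompactSpace P] [T2Space P]
    [DiscreteTopology (A ⧸ P)] (hfg : AddGroup.FG (A ⧸ P)) (m : ℕ) (hm : 0 < m) :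
    IsClosed ((nSub A m : Set A)) := by
  haveI : T1Space A := IsTopologicalAddGroup.t1Space A (zero_isClosed P hPc)
  haveI : T2Space A := inferInstance
  have hPopen := P_isOpen P
  have hPcpt : IsCompact (P : Set A) := isCompact_iff_compactSpace.mpr ‹_›
  have hTfin : {g : A ⧸ P | m • g = 0}.Finite :=
    (torsionSet_finite hfg).subset (fun g hg => ⟨m, hm, hg⟩)
  apply isClosed_of_closure_subset
  intro x hx
  have hoOpen : IsOpen {z : A | z - x ∈ P} :=
    hPopen.preimage (continuous_id.sub continuous_const)
  obtain ⟨y, hy1, hy2⟩ := mem_closure_iff.mp hx {z | z - x ∈ P} hoOpen (by simp [P.zero_mem])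
  obtain ⟨a, rfl⟩ := hy2
  set C : Set A := ⋃ t ∈ {g : A ⧸ P | m • g = 0},
      (fun p : A => m • a + m • (Quotient.out t) + m • p) '' (P : Set A) with hC
  have hCcpt : IsCompact C :=
    hTfin.isCompact_biUnion fun t _ =>
      hPcpt.image (continuous_const.add (continuous_nsmul m))
  have hCsub : C ⊆ (nSub A m : Set A) := by
    intro z hz
    simp only [C, Set.mem_iUnion, Set.mem_image] at hz
    obtain ⟨t, ht, p, hp, rfl⟩ := hz
    refine ⟨a + Quotient.out t + p, ?_⟩
    show m • (a + Quotient.out t + p) = m • a + m • Quotient.out t + m • p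
    rw [smul_add, smul_add]
  have hxU : x ∈ {z : A | z - m • a ∈ P} := by
    have := P.neg_mem hy1
    simpa [neg_sub] using this
  have hUopen : IsOpen {z : A | z - m • a ∈ P} :=
    hPopen.preimage (continuous_id.sub continuous_const)
  have hkey : {z : A | z - m • a ∈ P} ∩ (nSub A m : Set A) ⊆ C := by
    rintro z ⟨hz1, b, rfl⟩
    have hmem : m • (b - a) ∈ P := by simpa [smul_sub] using hz1
    have hg : m • (QuotientAddGroup.mk (b - a) : A ⧸ P) = 0 := by
      have h' : ((QuotientAddGroup.mk' P) (m • (b - a))) = 0 :=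
        (QuotientAddGroup.eq_zero_iff _).mpr hmem
      simpa [map_nsmul] using h'
    have hw : b - a - Quotient.out (QuotientAddGroup.mk (b - a) : A ⧸ P) ∈ (P : Set A) := by
      apply (QuotientAddGroup.eq_zero_iff _).mp
      simp [QuotientAddGroup.mk_sub, QuotientAddGroup.out_eq']
    have heq : m • a + m • Quotient.out (QuotientAddGroup.mk (b - a) : A ⧸ P) +
        m • (b - a - Quotient.out (QuotientAddGroup.mk (b - a) : A ⧸ P)) = m • b := by
      rw [smul_sub, smul_sub]
      abel
    exact Set.mem_biUnion hg ⟨_, hw, heq⟩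
  have hxC : x ∈ closure C := by
    have h1 : x ∈ closure ({z : A | z - m • a ∈ P} ∩ (nSub A m : Set A)) :=
      hUopen.inter_closure ⟨hxU, hx⟩
    exact closure_mono hkey h1
  rw [hCcpt.isClosed.closure_eq] at hxC
  exact hCsub hxC

private lemma torsionSet_isCompact (hPc : IsClosed (P : Set A)) [CompactSpace P] [T2Space P]
    [DiscreteTopology (A ⧸ P)] (hfg : AddGroup.FG (A ⧸ P)) (n : ℕ) (hn : 0 < n) :
    IsCompact {x : A | n • x = 0} := by
  haveI : T1Space A := IsTopologicalAddGroup.t1Space A (zero_isClosed P hPc)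
  have hPcpt : IsCompact (P : Set A) := isCompact_iff_compactSpace.mpr ‹_›
  have hTfin : {g : A ⧸ P | n • g = 0}.Finite :=
    (torsionSet_finite hfg).subset (fun g hg => ⟨n, hn, hg⟩)
  have hScl : IsClosed {x : A | n • x = 0} :=
    isClosed_singleton.preimage (continuous_nsmul n)
  set K : Set A := ⋃ t ∈ {g : A ⧸ P | n • g = 0},
      (fun p : A => Quotient.out t + p) '' (P : Set A) with hK
  have hKcpt : IsCompact K :=
    hTfin.isCompact_biUnion fun t _ => hPcpt.image (continuous_const.add continuous_id)
  refine IsCompact.of_isClosed_subset hKcpt hScl ?_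
  intro x hx
  have hg : n • (QuotientAddGroup.mk x : A ⧸ P) = 0 := by
    have h' : ((QuotientAddGroup.mk' P) (n • x)) = 0 := by
      rw [hx]; exact map_zero _
    simpa [map_nsmul] using h'
  have hw : x - Quotient.out (QuotientAddGroup.mk x : A ⧸ P) ∈ (P : Set A) := by
    apply (QuotientAddGroup.eq_zero_iff _).mp
    simp [QuotientAddGroup.mk_sub, QuotientAddGroup.out_eq']
  have heq : Quotient.out (QuotientAddGroup.mk x : A ⧸ P) +
      (x - Quotient.out (QuotientAddGroup.mk x : A ⧸ P)) = x := by abel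
  exact Set.mem_biUnion hg ⟨_, hw, heq⟩

private lemma inj_core (hPc : IsClosed (P : Set A)) [CompactSpace P] [T2Space P]
    [TotallyDisconnectedSpace P] [DiscreteTopology (A ⧸ P)] (hfg : AddGroup.FG (A ⧸ P))
    {n : ℕ} (hn : 0 < n) (d : A) (hdn : n • d = 0)
    (hd : ∀ m : ℕ, 0 < m → d ∈ nSub A m) : d = 0 := by
  obtain ⟨e, he, hkill⟩ := exists_killer hfg
  have key : ∀ m : ℕ, 0 < m → ∃ p ∈ P, d = m • p := by
    intro m hm
    obtain ⟨a, ha0⟩ := hd (m * e) (Nat.mul_pos hm he)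
    have ha : (m * e) • a = d := ha0
    have h1 : (n * (m * e)) • (QuotientAddGroup.mk a : A ⧸ P) = 0 := by
      have h0 : ((QuotientAddGroup.mk' P) (n • ((m * e) • a))) = 0 := by
        rw [ha, hdn]; exact map_zero _
      have := h0
      simpa [map_nsmul, mul_smul] using this
    have h2 : e • (QuotientAddGroup.mk a : A ⧸ P) = 0 :=
      hkill _ ⟨n * (m * e), by positivity, h1⟩
    have h3 : e • a ∈ P := by
      apply (QuotientAddGroup.eq_zero_iff _).mp
      have h' : ((QuotientAddGroup.mk' P) (e • a)) = 0 := by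
        rw [map_nsmul]; exact h2
      exact h'
    exact ⟨e • a, h3, by rw [← ha]; exact mul_smul m e a⟩
  have hdP : d ∈ P := by
    obtain ⟨p, hp, hd1⟩ := key 1 one_pos
    rw [one_smul] at hd1
    rw [hd1]; exact hp
  haveI : TotallySeparatedSpace P := loc_compact_t2_tot_disc_iff_tot_sep.mp ‹_›
  by_contra hne
  have hxne : (0 : P) ≠ (⟨d, hdP⟩ : P) := by
    intro h
    exact hne (by simpa using congrArg Subtype.val h.symm)
  obtain ⟨V, hVcl, h0V, hxV⟩ := exists_isClopen_of_totally_separated hxne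
  obtain ⟨U, hUV⟩ :=
    IsTopologicalAddGroup.exist_openAddSubgroup_sub_clopen_nhds_of_zero hVcl h0V
  haveI : Finite (P ⧸ U.toAddSubgroup) :=
    AddSubgroup.quotient_finite_of_isOpen _ U.isOpen
  haveI : Nonempty (P ⧸ U.toAddSubgroup) := ⟨0⟩
  obtain ⟨p, hp, hdp⟩ := key (Nat.card (P ⧸ U.toAddSubgroup)) Nat.card_pos
  have hxp : (⟨d, hdP⟩ : P) = Nat.card (P ⧸ U.toAddSubgroup) • (⟨p, hp⟩ : P) :=
    Subtype.ext (by simpa using hdp)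
  have hq : (QuotientAddGroup.mk (⟨d, hdP⟩ : P) : P ⧸ U.toAddSubgroup) = 0 := by
    rw [hxp]
    have h' := map_nsmul (QuotientAddGroup.mk' U.toAddSubgroup)
      (Nat.card (P ⧸ U.toAddSubgroup)) (⟨p, hp⟩ : P)
    calc (QuotientAddGroup.mk (Nat.card (P ⧸ U.toAddSubgroup) • (⟨p, hp⟩ : P)) :
          P ⧸ U.toAddSubgroup)
        = Nat.card (P ⧸ U.toAddSubgroup) •
            (QuotientAddGroup.mk (⟨p, hp⟩ : P) : P ⧸ U.toAddSubgroup) := h'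
      _ = 0 := card_nsmul_eq_zero'
  have hxU : (⟨d, hdP⟩ : P) ∈ U.toAddSubgroup := (QuotientAddGroup.eq_zero_iff _).mp hq
  exact hxV (hUV hxU)

end Topo

/-- If `A` is a topological abelian group in the class ℰ, then for every positive
integer `n` the natural map `A → A_∧` restricts to a bijection from the `n`-torsion
subgroup of `A` onto the `n`-torsion subgroup of `A_∧`. -/
theorem statement_17 (A : Type*) [AddCommGroup A] [TopologicalSpace A]
    [IsTopologicalAddGroup A] (hA : IsClassE A) (n : ℕ) (hn : 0 < n) :
    Set.BijOn (⇑(toCompl A)) {x : A | n • x = 0} {y : ↥(ComplNA A) | n • y = 0} := by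
  obtain ⟨P, hPc, hcomp, ht2, htd, hdisc, hfg⟩ := hA
  haveI := hcomp; haveI := ht2; haveI := htd; haveI := hdisc
  refine ⟨?_, ?_, ?_⟩
  · -- MapsTo
    intro x hx
    show n • toCompl A x = 0
    rw [← map_nsmul, hx, map_zero]
  · -- InjOn
    intro a ha b hb hab
    have hd : ∀ m : ℕ, 0 < m → a - b ∈ nSub A m := by
      intro m hm
      have h1 : (QuotientAddGroup.mk a : A ⧸ nSub A ((⟨m, hm⟩ : ℕ+) : ℕ)) =
          QuotientAddGroup.mk b := congrArg (fun z => z.val (⟨m, hm⟩ : ℕ+)) hab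
      exact QuotientAddGroup.eq_iff_sub_mem.mp h1
    have hdn : n • (a - b) = 0 := by
      have ha' : n • a = 0 := ha
      have hb' : n • b = 0 := hb
      rw [smul_sub, ha', hb', sub_zero]
    have := inj_core P hPc hfg hn (a - b) hdn hd
    exact sub_eq_zero.mp this
  · -- SurjOn
    intro y hy
    have hyc : ∀ m : ℕ+, n • (y.val m) = 0 := by
      intro m
      have h := congrArg (fun z => z.val m) hy
      simpa using h
    set Y : ℕ+ → Set A := fun m =>
      {c : A | n • c = 0 ∧ (QuotientAddGroup.mk c : A ⧸ nSub A (m : ℕ)) = y.val m}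
      with hYdef
    haveI : T1Space A := IsTopologicalAddGroup.t1Space A (zero_isClosed P hPc)
    have hclosed : ∀ m, IsClosed (Y m) := by
      intro m
      have h1 : IsClosed {c : A | n • c = 0} :=
        isClosed_singleton.preimage (continuous_nsmul n)
      have h2 : {c : A | (QuotientAddGroup.mk c : A ⧸ nSub A (m : ℕ)) = y.val m}
          = (fun c : A => c - Quotient.out (y.val m)) ⁻¹' (nSub A (m : ℕ) : Set A) := by
        ext c
        simp only [Set.mem_setOf_eq, Set.mem_preimage, SetLike.mem_coe]
        rw [← QuotientAddGroup.eq_iff_sub_mem, QuotientAddGroup.out_eq']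
      have h3 : IsClosed {c : A | (QuotientAddGroup.mk c : A ⧸ nSub A (m : ℕ)) = y.val m} := by
        rw [h2]
        exact (nSub_isClosed P hPc hfg (m : ℕ) m.pos).preimage
          (continuous_id.sub continuous_const)
      exact h1.inter h3
    have hcpt : ∀ m, IsCompact (Y m) := fun m =>
      IsCompact.of_isClosed_subset (torsionSet_isCompact P hPc hfg n hn) (hclosed m)
        (fun c hc => hc.1)
    have hne : ∀ m, (Y m).Nonempty := by
      intro m
      obtain ⟨N, hNval⟩ : ∃ N : ℕ+, (N : ℕ) = n := ⟨⟨n, hn⟩, rfl⟩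
      obtain ⟨a, ha0⟩ := QuotientAddGroup.mk'_surjective
        (nSub A ((N * m : ℕ+) : ℕ)) (y.val (N * m))
      have ha : (QuotientAddGroup.mk a : A ⧸ nSub A ((N * m : ℕ+) : ℕ)) = y.val (N * m) := ha0
      have hdvd : (m : ℕ) ∣ ((N * m : ℕ+) : ℕ) := ⟨n, by
        simp [PNat.mul_coe, hNval, mul_comm]⟩
      have hproj : (QuotientAddGroup.mk a : A ⧸ nSub A (m : ℕ)) = y.val m := by
        have h1 := y.2 m (N * m) hdvd
        rw [← h1, ← ha]
        rfl
      have hna : n • a ∈ nSub A ((N * m : ℕ+) : ℕ) := by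
        apply (QuotientAddGroup.eq_zero_iff _).mp
        have h0 := hyc (N * m)
        rw [← ha] at h0
        have h' : ((QuotientAddGroup.mk'
            (nSub A ((N * m : ℕ+) : ℕ))) (n • a)) = 0 := by
          rw [map_nsmul]; exact h0
        exact h'
      obtain ⟨b, hb0⟩ := hna
      have hb : ((N * m : ℕ+) : ℕ) • b = n • a := hb0
      refine ⟨a - (m : ℕ) • b, ?_, ?_⟩
      · have hsm : n • ((m : ℕ) • b) = ((N * m : ℕ+) : ℕ) • b := by
          rw [← mul_smul]
          congr 1
          simp [PNat.mul_coe, hNval, mul_comm]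
        show n • (a - (m : ℕ) • b) = 0
        rw [smul_sub, hsm, hb, sub_self]
      · show (QuotientAddGroup.mk (a - (m : ℕ) • b) : A ⧸ nSub A (m : ℕ)) = y.val m
        have hmb : (QuotientAddGroup.mk ((m : ℕ) • b) : A ⧸ nSub A (m : ℕ)) = 0 :=
          (QuotientAddGroup.eq_zero_iff _).mpr ⟨b, rfl⟩
        rw [QuotientAddGroup.mk_sub, hmb, sub_zero, hproj]
    have hdir : Directed (· ⊇ ·) Y := by
      have step : ∀ (m₁ m₂ : ℕ+), Y (m₁ * m₂) ⊆ Y m₁ := by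
        intro m₁ m₂ c hc
        refine ⟨hc.1, ?_⟩
        have hdvd : (m₁ : ℕ) ∣ ((m₁ * m₂ : ℕ+) : ℕ) := ⟨m₂, by simp [PNat.mul_coe]⟩
        have h1 := y.2 m₁ (m₁ * m₂) hdvd
        rw [← h1, ← hc.2]
        rfl
      intro m₁ m₂
      refine ⟨m₁ * m₂, step m₁ m₂, ?_⟩
      rw [mul_comm]
      exact step m₂ m₁
    obtain ⟨c, hc⟩ := IsCompact.nonempty_iInter_of_directed_nonempty_isCompact_isClosed
      Y hdir hne hcpt hclosed
    have hcm : ∀ m, c ∈ Y m := fun m => Set.mem_iInter.mp hc m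
    exact ⟨c, (hcm 1).1, Subtype.ext (funext fun m => (hcm m).2)⟩
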